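/- Fix a positive integer x₀ and define the probability density f_{x₀}(v) = (4/π) · sin( x₀ · arcsin v )² / sqrt(1 − v²) for v ∈ (0,1). Then: (i) for every v ∈ [0,1], ∫_0^v f_{x₀}(u) du = (2 arcsin v)/π − sin( 2 x₀ arcsin v ) / ( π x₀ ); and (ii) the expectation ∫_0^1 v · f_{x₀}(v) dv = 8 / ( 4π − π/x₀² ). -/

import Mathlib

open Real

/-- The probability density of the time-of-flight speed `V(M_{x₀})` of the cursor of
Feynman's quantum computer when the excitation is started at site `x₀`. -/
noncomputable def speedDensity (x₀ : ℕ) (v : ℝ) : ℝ :=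
  (4 / π) * Real.sin (x₀ * Real.arcsin v) ^ 2 / Real.sqrt (1 - v ^ 2)

/-- Antiderivative of `v * speedDensity x₀ v`. -/
noncomputable def speedMeanAux (x₀ : ℕ) (v : ℝ) : ℝ :=
  (2 / π) * (Real.cos ((1 + 2 * x₀) * Real.arcsin v) / (2 * (1 + 2 * x₀))
    + Real.cos ((1 - 2 * x₀) * Real.arcsin v) / (2 * (1 - 2 * x₀))
    - Real.sqrt (1 - v ^ 2))

lemma speedDensity_nonneg (x₀ : ℕ) (u : ℝ) : 0 ≤ speedDensity x₀ u := by
  have := Real.pi_pos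
  unfold speedDensity
  positivity

lemma hasDerivAt_speedCdf (x₀ : ℕ) (hx₀ : 1 ≤ x₀) {x : ℝ} (h1 : -1 < x) (h2 : x < 1) :
    HasDerivAt (fun v => 2 * Real.arcsin v / π - Real.sin (2 * x₀ * Real.arcsin v) / (π * x₀))
      (speedDensity x₀ x) x := by
  have hπ := Real.pi_pos
  have hs : 0 < Real.sqrt (1 - x ^ 2) := Real.sqrt_pos.2 (by nlinarith)
  have ha := Real.hasDerivAt_arcsin h1.ne' h2.ne
  have h3 : HasDerivAt (fun v => Real.sin (2 * x₀ * Real.arcsin v))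
      (Real.cos (2 * x₀ * Real.arcsin x) * (2 * x₀ * (1 / Real.sqrt (1 - x ^ 2)))) x :=
    (Real.hasDerivAt_sin _).comp x (ha.const_mul _)
  have h4 := ((ha.const_mul 2).div_const π).sub (h3.div_const (π * x₀))
  unfold speedDensity
  convert h4 using 1
  case e'_4 => rfl
  case e'_5 => rfl
  case e'_8 => rfl
  have hx0 : (x₀ : ℝ) ≠ 0 := Nat.cast_ne_zero.2 (by omega)
  rw [show 2 * (x₀ : ℝ) * Real.arcsin x = 2 * (x₀ * Real.arcsin x) by ring,
    Real.cos_two_mul, Real.cos_sq']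
  field_simp
  ring

lemma hasDerivAt_speedMeanAux (x₀ : ℕ) (hx₀ : 1 ≤ x₀) {x : ℝ} (h1 : -1 < x) (h2 : x < 1) :
    HasDerivAt (speedMeanAux x₀) (x * speedDensity x₀ x) x := by
  have hπ := Real.pi_pos
  have h1x : (0:ℝ) < 1 - x ^ 2 := by nlinarith
  have hs : 0 < Real.sqrt (1 - x ^ 2) := Real.sqrt_pos.2 h1x
  have hs2 : Real.sqrt (1 - x ^ 2) ^ 2 = 1 - x ^ 2 := Real.sq_sqrt h1x.le
  have ha := Real.hasDerivAt_arcsin h1.ne' h2.ne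
  have hc1 : HasDerivAt (fun v => Real.cos ((1 + 2 * x₀) * Real.arcsin v))
      (-Real.sin ((1 + 2 * x₀) * Real.arcsin x) * ((1 + 2 * x₀) * (1 / Real.sqrt (1 - x ^ 2)))) x :=
    (Real.hasDerivAt_cos _).comp x (ha.const_mul _)
  have hc2 : HasDerivAt (fun v => Real.cos ((1 - 2 * x₀) * Real.arcsin v))
      (-Real.sin ((1 - 2 * x₀) * Real.arcsin x) * ((1 - 2 * x₀) * (1 / Real.sqrt (1 - x ^ 2)))) x :=
    (Real.hasDerivAt_cos _).comp x (ha.const_mul _)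
  have hq : HasDerivAt (fun v : ℝ => 1 - v ^ 2) (-(2 * x)) x := by
    simpa using ((hasDerivAt_pow 2 x).const_sub 1)
  have hsq : HasDerivAt (fun v : ℝ => Real.sqrt (1 - v ^ 2))
      (1 / (2 * Real.sqrt (1 - x ^ 2)) * (-(2 * x))) x :=
    (Real.hasDerivAt_sqrt h1x.ne').comp x hq
  have h4 := (((hc1.div_const (2 * (1 + 2 * (x₀:ℝ)))).add
      (hc2.div_const (2 * (1 - 2 * (x₀:ℝ))))).sub hsq).const_mul (2 / π)
  unfold speedMeanAux speedDensity
  convert h4 using 1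
  case e'_4 => rfl
  case e'_5 => rfl
  case e'_8 => rfl
  have hx0 : (x₀ : ℝ) ≠ 0 := Nat.cast_ne_zero.2 (by omega)
  have hx1 : (x₀ : ℝ) ≥ 1 := by exact_mod_cast hx₀
  have hd1 : (1 + 2 * (x₀:ℝ)) ≠ 0 := by nlinarith
  have hd2 : (1 - 2 * (x₀:ℝ)) ≠ 0 := by nlinarith
  have hsin : Real.sin (Real.arcsin x) = x := Real.sin_arcsin h1.le h2.le
  rw [show (1 + 2 * (x₀:ℝ)) * Real.arcsin x = Real.arcsin x + 2 * x₀ * Real.arcsin x by ring,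
    show (1 - 2 * (x₀:ℝ)) * Real.arcsin x = Real.arcsin x - 2 * x₀ * Real.arcsin x by ring,
    Real.sin_add, Real.sin_sub,
    show 2 * (x₀:ℝ) * Real.arcsin x = 2 * (x₀ * Real.arcsin x) by ring,
    Real.cos_two_mul, Real.cos_sq', hsin]
  field_simp
  rw [mul_div_cancel_right₀ _ (by linarith : (1 - (x₀:ℝ) * 2) ≠ 0)]
  ring

/-- (i) The cumulative distribution function of the time-of-flight speed `V(M_{x₀})` is
`F(v) = (2 arcsin v)/π − sin(2x₀ arcsin v)/(πx₀)` on `[0,1]`, and (ii) its expectation is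
`8/(4π − π/x₀²)`. -/
theorem speedDensity_cdf_and_mean (x₀ : ℕ) (hx₀ : 1 ≤ x₀) :
    (∀ v : ℝ, 0 ≤ v → v ≤ 1 →
      (∫ u in (0:ℝ)..v, speedDensity x₀ u) =
        2 * Real.arcsin v / π - Real.sin (2 * x₀ * Real.arcsin v) / (π * x₀)) ∧
    (∫ v in (0:ℝ)..1, v * speedDensity x₀ v) = 8 / (4 * π - π / (x₀ : ℝ) ^ 2) := by
  have hπ := Real.pi_pos
  have hx0 : (x₀ : ℝ) ≠ 0 := Nat.cast_ne_zero.2 (by omega)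
  constructor
  · intro v hv0 hv1
    have hcont : ContinuousOn
        (fun v => 2 * Real.arcsin v / π - Real.sin (2 * x₀ * Real.arcsin v) / (π * x₀))
        (Set.Icc 0 v) := by
      apply Continuous.continuousOn
      continuity
    have hD : ∀ x ∈ Set.Ioo (0:ℝ) v,
        HasDerivAt (fun v => 2 * Real.arcsin v / π - Real.sin (2 * x₀ * Real.arcsin v) / (π * x₀))
          (speedDensity x₀ x) x := fun x hx =>
      hasDerivAt_speedCdf x₀ hx₀ (by linarith [hx.1]) (lt_of_lt_of_le hx.2 hv1)
    have hderiv : ∀ x ∈ Set.Ioo (0:ℝ) v,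
        HasDerivWithinAt
          (fun v => 2 * Real.arcsin v / π - Real.sin (2 * x₀ * Real.arcsin v) / (π * x₀))
          (speedDensity x₀ x) (Set.Ioi x) x := fun x hx => (hD x hx).hasDerivWithinAt
    have hint : IntervalIntegrable (speedDensity x₀) MeasureTheory.volume 0 v := by
      rw [intervalIntegrable_iff_integrableOn_Ioo_of_le hv0]
      exact (intervalIntegral.integrableOn_deriv_of_nonneg hcont hD
        (fun x _ => speedDensity_nonneg x₀ x)).mono_set Set.Ioo_subset_Ioc_self
    rw [intervalIntegral.integral_eq_sub_of_hasDeriv_right_of_le hv0 hcont hderiv hint]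
    simp
  · have hcont : ContinuousOn (speedMeanAux x₀) (Set.Icc 0 1) := by
      apply Continuous.continuousOn
      unfold speedMeanAux
      continuity
    have hD : ∀ x ∈ Set.Ioo (0:ℝ) 1,
        HasDerivAt (speedMeanAux x₀) (x * speedDensity x₀ x) x := fun x hx =>
      hasDerivAt_speedMeanAux x₀ hx₀ (by linarith [hx.1]) hx.2
    have hderiv : ∀ x ∈ Set.Ioo (0:ℝ) 1,
        HasDerivWithinAt (speedMeanAux x₀) (x * speedDensity x₀ x) (Set.Ioi x) x :=
      fun x hx => (hD x hx).hasDerivWithinAt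
    have hint : IntervalIntegrable (fun v => v * speedDensity x₀ v)
        MeasureTheory.volume 0 1 := by
      rw [intervalIntegrable_iff_integrableOn_Ioo_of_le zero_le_one]
      exact (intervalIntegral.integrableOn_deriv_of_nonneg hcont hD
        (fun x hx => mul_nonneg hx.1.le (speedDensity_nonneg x₀ x))).mono_set
        Set.Ioo_subset_Ioc_self
    rw [intervalIntegral.integral_eq_sub_of_hasDeriv_right_of_le zero_le_one hcont hderiv hint]
    have hG1 : speedMeanAux x₀ 1 = 0 := by
      unfold speedMeanAux
      rw [Real.arcsin_one,
        show (1 + 2 * (x₀:ℝ)) * (π / 2) = π / 2 + x₀ * π by ring,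
        show (1 - 2 * (x₀:ℝ)) * (π / 2) = π / 2 - x₀ * π by ring,
        Real.cos_pi_div_two_sub, Real.cos_add, Real.sin_nat_mul_pi]
      norm_num
    have hG0 : speedMeanAux x₀ 0 =
        (2 / π) * (1 / (2 * (1 + 2 * x₀)) + 1 / (2 * (1 - 2 * x₀)) - 1) := by
      unfold speedMeanAux
      simp [Real.arcsin_zero]
    rw [hG1, hG0]
    have hx1 : (1:ℝ) ≤ (x₀:ℝ) := by exact_mod_cast hx₀
    have hd1 : (1 + 2 * (x₀:ℝ)) ≠ 0 := by nlinarith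
    have hd2 : (1 - 2 * (x₀:ℝ)) ≠ 0 := by nlinarith
    have hx2 : (1:ℝ) ≤ (x₀:ℝ) ^ 2 := by nlinarith
    have hle : π / (x₀:ℝ) ^ 2 ≤ π := div_le_self hπ.le hx2
    have hd3 : 4 * π - π / (x₀:ℝ) ^ 2 ≠ 0 := by nlinarith
    rw [eq_div_iff hd3]
    field_simp
    ring
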